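/- Let S ⊆ Y = P^{n_1} × ... × P^{n_k} be a nondegenerate circuit with #S = 4. Then either k = 1 and n_1 = 2, or k = 2 and n_1 = n_2 = 1. -/

import Mathlib

open scoped LinearAlgebra.Projectivization
open Projectivization

/-- The multiprojective space `Y = P^{n 0} × ... × P^{n (k-1)}` over `K`,
where `P^m = P(K^{m+1})`. -/
abbrev MultiProj (K : Type*) [Field K] {k : ℕ} (n : Fin k → ℕ) :=
  ∀ i : Fin k, ℙ K (Fin (n i + 1) → K)

/-- A vector representative of the Segre image `ν(x)` of a point `x ∈ Y`:
the tensor product of representatives of the coordinates. -/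
noncomputable def segreVec {K : Type*} [Field K] {k : ℕ} {n : Fin k → ℕ}
    (x : MultiProj K n) : PiTensorProduct K (fun i : Fin k => Fin (n i + 1) → K) :=
  PiTensorProduct.tprod K (fun i => (x i).rep)

/-- `e(S) = #S − 1 − dim⟨ν(S)⟩`, computed as `#S` minus the rank of the linear span
of vector representatives of `ν(S)`. -/
noncomputable def eSet {K : Type*} [Field K] {k : ℕ} {n : Fin k → ℕ}
    (S : Set (MultiProj K n)) : ℕ :=
  S.ncard - Module.finrank K ↥(Submodule.span K (segreVec '' S))

/-- `S ⊆ Y` is nondegenerate: `π i '' S` spans `P^{n i}` for every `i`. -/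
def Nondeg {K : Type*} [Field K] {k : ℕ} {n : Fin k → ℕ}
    (S : Set (MultiProj K n)) : Prop :=
  ∀ i : Fin k, Submodule.span K ((fun x => (x i).rep) '' S) = ⊤

/-- For products of `P^1`'s: `S` is nondegenerate iff each projection has ≥ 2 points. -/
def NondegPts {K : Type*} [Field K] {k : ℕ} {n : Fin k → ℕ}
    (S : Set (MultiProj K n)) : Prop :=
  ∀ i : Fin k, ∃ p ∈ S, ∃ q ∈ S, p i ≠ q i

/-- `S` is a circuit: linearly dependent, but every proper subset is linearly independent. -/
def IsCircuit {K : Type*} [Field K] {k : ℕ} {n : Fin k → ℕ}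
    (S : Set (MultiProj K n)) : Prop :=
  0 < eSet S ∧ ∀ S' : Set (MultiProj K n), S' ⊂ S → eSet S' = 0

/-- `q ∈ P^r` equals `ν(s)` for the point `s ∈ Y`. -/
def IsSegreOf {K : Type*} [Field K] {k : ℕ} {n : Fin k → ℕ}
    (q : ℙ K (PiTensorProduct K (fun i : Fin k => Fin (n i + 1) → K)))
    (s : MultiProj K n) : Prop :=
  ∃ c : K, q.rep = c • segreVec s

/-- `q ∈ P^r` lies on the Segre variety `ν(Y)`. -/
def InSegre {K : Type*} [Field K] {k : ℕ} {n : Fin k → ℕ}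
    (q : ℙ K (PiTensorProduct K (fun i : Fin k => Fin (n i + 1) → K))) : Prop :=
  ∃ y : MultiProj K n, IsSegreOf q y

/-- `S` is minimal: there is no projective line `L ⊆ P^r` contained in the Segre variety
`ν(Y)` meeting `ν(S)` in at least two points. -/
def IsMinimal {K : Type*} [Field K] {k : ℕ} {n : Fin k → ℕ}
    (S : Set (MultiProj K n)) : Prop :=
  ¬ ∃ W : Submodule K (PiTensorProduct K (fun i : Fin k => Fin (n i + 1) → K)),
      Module.finrank K ↥W = 2 ∧
      (∀ x : ℙ K (PiTensorProduct K (fun i : Fin k => Fin (n i + 1) → K)),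
        x.rep ∈ W → InSegre x) ∧
      ∃ x₁ x₂ : ℙ K (PiTensorProduct K (fun i : Fin k => Fin (n i + 1) → K)),
        x₁ ≠ x₂ ∧ x₁.rep ∈ W ∧ x₂.rep ∈ W ∧
        (∃ s₁ ∈ S, IsSegreOf x₁ s₁) ∧ (∃ s₂ ∈ S, IsSegreOf x₂ s₂)

/-- The `X`-rank of a point `q ∈ P^r`: the minimal cardinality of a finite `A ⊆ Y`
with `q ∈ ⟨ν(A)⟩`. -/
noncomputable def xRank {K : Type*} [Field K] {k : ℕ} {n : Fin k → ℕ}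
    (q : ℙ K (PiTensorProduct K (fun i : Fin k => Fin (n i + 1) → K))) : ℕ :=
  sInf {m : ℕ | ∃ A : Set (MultiProj K n), A.Finite ∧ A.ncard = m ∧
    q.rep ∈ Submodule.span K (segreVec '' A)}

namespace SegreAux

variable {K : Type*} [Field K] {k : ℕ} {n : Fin k → ℕ}

/-- shorthand for the ambient tensor space -/
abbrev TV (K : Type*) [Field K] {k : ℕ} (n : Fin k → ℕ) : Type _ :=
  PiTensorProduct K (fun i : Fin k => Fin (n i + 1) → K)

/-- a fixed nonzero vector in each factor -/
def onev (K : Type*) [Field K] {k : ℕ} (n : Fin k → ℕ) (i : Fin k) : Fin (n i + 1) → K :=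
  fun _ => 1

lemma onev_ne_zero (i : Fin k) : onev K n i ≠ 0 := fun h => one_ne_zero (congrFun h 0)

/-- proportionality -/
def Para (K : Type*) [Field K] {M : Type*} [AddCommGroup M] [Module K M] (a b : M) : Prop :=
  ∃ c : K, c ≠ 0 ∧ a = c • b

lemma Para.rfl {M : Type*} [AddCommGroup M] [Module K M] {a : M} : Para K a a :=
  ⟨1, one_ne_zero, (one_smul K a).symm⟩

lemma Para.symm {M : Type*} [AddCommGroup M] [Module K M] {a b : M} (h : Para K a b) :
    Para K b a := by
  obtain ⟨c, hc, rfl⟩ := h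
  exact ⟨c⁻¹, inv_ne_zero hc, by rw [smul_smul, inv_mul_cancel₀ hc, one_smul]⟩

lemma Para.trans {M : Type*} [AddCommGroup M] [Module K M] {a b c : M}
    (h1 : Para K a b) (h2 : Para K b c) : Para K a c := by
  obtain ⟨u, hu, rfl⟩ := h1
  obtain ⟨v, hv, rfl⟩ := h2
  exact ⟨u * v, mul_ne_zero hu hv, (smul_smul u v c)⟩

lemma para_zero_left {M : Type*} [AddCommGroup M] [Module K M] {b : M} (h : Para K 0 b) :
    b = 0 := by
  obtain ⟨c, hc, h⟩ := h
  have h2 : c • b = 0 := h.symm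
  rcases smul_eq_zero.mp h2 with h3 | h3
  · exact absurd h3 hc
  · exact h3

lemma not_para_of_ne {m : ℕ} {u v : ℙ K (Fin m → K)} (h : u ≠ v) : ¬ Para K u.rep v.rep := by
  rintro ⟨c, hc, hrep⟩
  apply h
  rw [← u.mk_rep, ← v.mk_rep]
  exact (Projectivization.mk_eq_mk_iff' K _ _ u.rep_nonzero v.rep_nonzero).2 ⟨c, hrep.symm⟩

lemma eq_of_para_rep {m : ℕ} {u v : ℙ K (Fin m → K)} (h : Para K u.rep v.rep) : u = v := by
  by_contra hne
  exact not_para_of_ne hne h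



/-- The contraction-at-slot-`i` multilinear map. -/
noncomputable def contrM (i : Fin k) (φ : (Fin (n i + 1) → K) →ₗ[K] K) :
    MultilinearMap K (fun i : Fin k => Fin (n i + 1) → K) (TV K n) where
  toFun f := φ (f i) • PiTensorProduct.tprod K (Function.update f i (onev K n i))
  map_update_add' := by
    intro dec m j x y
    have hdec : dec = instDecidableEqFin k := Subsingleton.elim _ _
    subst hdec
    rcases eq_or_ne j i with rfl | hj
    · simp [Function.update_idem, map_add, add_smul]
    · have hij : i ≠ j := hj.symm
      simp only [Function.update_of_ne hij]
      rw [Function.update_comm hj (x + y) (onev K n i) m, Function.update_comm hj x (onev K n i) m,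
        Function.update_comm hj y (onev K n i) m, MultilinearMap.map_update_add, smul_add]
  map_update_smul' := by
    intro dec m j r x
    have hdec : dec = instDecidableEqFin k := Subsingleton.elim _ _
    subst hdec
    rcases eq_or_ne j i with rfl | hj
    · simp [Function.update_idem, map_smul, smul_smul]
    · have hij : i ≠ j := hj.symm
      simp only [Function.update_of_ne hij]
      rw [Function.update_comm hj (r • x) (onev K n i) m, Function.update_comm hj x (onev K n i) m,
        MultilinearMap.map_update_smul, smul_comm]

noncomputable def contr (i : Fin k) (φ : (Fin (n i + 1) → K) →ₗ[K] K) :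
    TV K n →ₗ[K] TV K n :=
  PiTensorProduct.lift (contrM i φ)

@[simp] lemma contr_tprod (i : Fin k) (φ : (Fin (n i + 1) → K) →ₗ[K] K)
    (f : ∀ l, Fin (n l + 1) → K) :
    contr i φ (PiTensorProduct.tprod K f)
      = φ (f i) • PiTensorProduct.tprod K (Function.update f i (onev K n i)) :=
  PiTensorProduct.lift.tprod f

noncomputable def ev (φs : ∀ i : Fin k, (Fin (n i + 1) → K) →ₗ[K] K) : TV K n →ₗ[K] K :=
  PiTensorProduct.lift ((MultilinearMap.mkPiAlgebra K (Fin k) K).compLinearMap φs)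

@[simp] lemma ev_tprod (φs : ∀ i : Fin k, (Fin (n i + 1) → K) →ₗ[K] K)
    (f : ∀ l, Fin (n l + 1) → K) :
    ev φs (PiTensorProduct.tprod K f) = ∏ i, φs i (f i) := by
  simp [ev, PiTensorProduct.lift.tprod]

lemma tprod_ne_zero (f : ∀ l, Fin (n l + 1) → K) (hf : ∀ i, f i ≠ 0) :
    PiTensorProduct.tprod K f ≠ 0 := by
  have h : ∀ i, ∃ φ : (Fin (n i + 1) → K) →ₗ[K] K, φ (f i) = 1 := by
    intro i
    obtain ⟨j, hj⟩ := Function.ne_iff.mp (hf i)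
    refine ⟨(f i j)⁻¹ • LinearMap.proj j, ?_⟩
    simp only [LinearMap.smul_apply, LinearMap.proj_apply, smul_eq_mul]
    exact inv_mul_cancel₀ (by simpa using hj)
  choose φs hφs using h
  intro h0
  have h1 := congrArg (ev φs) h0
  rw [ev_tprod, map_zero] at h1
  simp only [hφs] at h1
  simp at h1

lemma exists_functional {m : ℕ} (W : Submodule K (Fin m → K)) {b : Fin m → K} (hb : b ∉ W) :
    ∃ φ : (Fin m → K) →ₗ[K] K, φ b ≠ 0 ∧ ∀ w ∈ W, φ w = 0 := by
  obtain ⟨f, hf, hf'⟩ := W.exists_dual_map_eq_bot_of_notMem hb inferInstance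
  refine ⟨f, hf, fun w hw => ?_⟩
  have : f w ∈ W.map f := Submodule.mem_map_of_mem hw
  rw [hf'] at this
  simpa using this



lemma two_term {M : Type*} [AddCommGroup M] [Module K M] {cA cB : K} {A B : M}
    (h : cA • A + cB • B = 0) (hcA : cA ≠ 0) (hA : A ≠ 0) : cB ≠ 0 ∧ Para K A B := by
  have hcB : cB ≠ 0 := by
    rintro rfl
    rw [zero_smul, add_zero] at h
    rcases smul_eq_zero.mp h with h' | h'
    · exact hcA h'
    · exact hA h'
  have h1 : cA • A = -(cB • B) := eq_neg_of_add_eq_zero_left h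
  refine ⟨hcB, ⟨-(cA⁻¹ * cB), by simp [hcA, hcB], ?_⟩⟩
  calc A = cA⁻¹ • (cA • A) := by rw [smul_smul, inv_mul_cancel₀ hcA, one_smul]
  _ = cA⁻¹ • (-(cB • B)) := by rw [h1]
  _ = (-(cA⁻¹ * cB)) • B := by rw [smul_neg, smul_smul, neg_smul]

lemma update_slots_ne_zero {f : ∀ l, Fin (n l + 1) → K} (hf : ∀ l, f l ≠ 0) (i : Fin k) :
    ∀ l, Function.update f i (onev K n i) l ≠ 0 := by
  intro l
  rcases eq_or_ne l i with rfl | hl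
  · rw [Function.update_self]; exact onev_ne_zero l
  · rw [Function.update_of_ne hl]; exact hf l

lemma para_slots {f g : ∀ l, Fin (n l + 1) → K} (hf : ∀ l, f l ≠ 0)
    (h : Para K (PiTensorProduct.tprod K f) (PiTensorProduct.tprod K g)) (i : Fin k) :
    Para K (f i) (g i) := by
  by_contra hip
  have hfi : f i ∉ Submodule.span K {g i} := by
    intro hmem
    obtain ⟨c, hc⟩ := Submodule.mem_span_singleton.mp hmem
    have hc0 : c ≠ 0 := by rintro rfl; rw [zero_smul] at hc; exact hf i hc.symm
    exact hip ⟨c, hc0, hc.symm⟩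
  obtain ⟨φ, hφf, hφW⟩ := exists_functional _ hfi
  have hφg : φ (g i) = 0 := hφW _ (Submodule.mem_span_singleton_self _)
  obtain ⟨c, hc, he⟩ := h
  have h2 := congrArg (contr i φ) he
  rw [contr_tprod, map_smul, contr_tprod, hφg, zero_smul, smul_zero] at h2
  rcases smul_eq_zero.mp h2 with h3 | h3
  · exact hφf h3
  · exact tprod_ne_zero _ (update_slots_ne_zero hf i) h3

lemma phi_zero_on_top {M : Type*} [AddCommGroup M] [Module K M] {s : Set M}
    (hs : Submodule.span K s = ⊤) {φ : M →ₗ[K] K} (h : ∀ x ∈ s, φ x = 0) (y : M) : φ y = 0 := by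
  have h1 : Submodule.span K s ≤ LinearMap.ker φ := Submodule.span_le.mpr h
  rw [hs] at h1
  exact h1 Submodule.mem_top

lemma dim2_span {m : ℕ} (hm : m = 2) {a b : Fin m → K} (ha : a ≠ 0) (hb : b ≠ 0)
    (hab : ¬ Para K b a) : Submodule.span K {b, a} = ⊤ := by
  subst hm
  have hli : LinearIndependent K ![b, a] := by
    rw [linearIndependent_fin2]
    refine ⟨ha, fun c hc => ?_⟩
    simp only [Matrix.cons_val_one, Matrix.head_cons, Matrix.cons_val_zero] at hc
    rcases eq_or_ne c 0 with rfl | hc0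
    · rw [zero_smul] at hc; exact hb hc.symm
    · exact hab ⟨c, hc0, hc.symm⟩
  have hr : Set.range ![b, a] = {b, a} := by
    ext z; simp [Fin.exists_fin_two, or_comm]
  apply Submodule.eq_top_of_finrank_eq
  rw [← hr, finrank_span_eq_card hli]
  simp [Module.finrank_pi]

lemma phi_ne_zero_dim2 {m : ℕ} (hm : m = 2) {a b z : Fin m → K} (ha : a ≠ 0) (hb : b ≠ 0)
    (hab : ¬ Para K b a) {φ : (Fin m → K) →ₗ[K] K} (hφa : φ a = 0) (hφz : φ z ≠ 0) :
    φ b ≠ 0 := by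
  intro hφb
  apply hφz
  refine phi_zero_on_top (dim2_span hm ha hb hab) ?_ z
  intro x hx
  rcases hx with rfl | hx
  · exact hφb
  · rw [Set.mem_singleton_iff] at hx; subst hx; exact hφa

lemma not_all_smul_of_span_top {m : ℕ} (hm : 2 ≤ m) {ι : Type*} {xfam : ι → Fin m → K}
    (hspan : Submodule.span K (Set.range xfam) = ⊤) (w : Fin m → K)
    (h : ∀ j, ∃ c : K, xfam j = c • w) : False := by
  have h1 : Submodule.span K (Set.range xfam) ≤ Submodule.span K {w} := by
    rw [Submodule.span_le]
    rintro _ ⟨j, rfl⟩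
    obtain ⟨c, hc⟩ := h j
    exact Submodule.mem_span_singleton.mpr ⟨c, hc.symm⟩
  rw [hspan] at h1
  have htop : Submodule.span K {w} = ⊤ := top_le_iff.mp h1
  have hfr : Module.finrank K (Fin m → K) = m := by simp [Module.finrank_pi]
  rcases eq_or_ne w 0 with rfl | hw
  · rw [Set.singleton_zero, Submodule.span_zero] at htop
    have : Module.finrank K (Fin m → K) = 0 := by
      rw [← finrank_top K (Fin m → K), ← htop]
      simp
    omega
  · have h2 : Module.finrank K ↥(Submodule.span K {w}) = 1 := finrank_span_singleton hw
    rw [htop] at h2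
    rw [finrank_top] at h2
    omega

lemma fin4_compl : ∀ a b : Fin 4, a ≠ b → ∃ c d : Fin 4,
    a ≠ c ∧ a ≠ d ∧ b ≠ c ∧ b ≠ d ∧ c ≠ d := by decide

lemma fin4_fourth : ∀ a b c : Fin 4, a ≠ b → a ≠ c → b ≠ c →
    ∃ d, a ≠ d ∧ b ≠ d ∧ c ≠ d := by decide

lemma fin4_univ : ∀ a b c d : Fin 4, a ≠ b → a ≠ c → a ≠ d → b ≠ c → b ≠ d → c ≠ d →
    (Finset.univ : Finset (Fin 4)) = {a, b, c, d} := by decide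

lemma fin4_sum {M : Type*} [AddCommMonoid M] (F : Fin 4 → M) {a b c d : Fin 4}
    (hab : a ≠ b) (hac : a ≠ c) (had : a ≠ d) (hbc : b ≠ c) (hbd : b ≠ d) (hcd : c ≠ d) :
    ∑ j, F j = F a + (F b + (F c + F d)) := by
  rw [fin4_univ a b c d hab hac had hbc hbd hcd]
  rw [Finset.sum_insert (by simp [hab, hac, had]), Finset.sum_insert (by simp [hbc, hbd]),
    Finset.sum_insert (by simp [hcd]), Finset.sum_singleton]

lemma exists_ne_fin (hk : 2 ≤ k) (i : Fin k) : ∃ l : Fin k, l ≠ i :=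
  Fintype.exists_ne_of_one_lt_card (by rw [Fintype.card_fin]; omega) i

lemma exists_ne_ne_fin (hk : 3 ≤ k) (i j : Fin k) : ∃ l : Fin k, l ≠ i ∧ l ≠ j := by
  by_contra h
  push_neg at h
  have hsub : (Finset.univ : Finset (Fin k)) ⊆ {i, j} := by
    intro l _
    rcases eq_or_ne l i with rfl | hl
    · simp
    · simp [h l hl]
  have hc := Finset.card_le_card hsub
  have h2 : ({i, j} : Finset (Fin k)).card ≤ 2 := (Finset.card_insert_le _ _).trans (by simp)
  rw [Finset.card_univ, Fintype.card_fin] at hc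
  omega

section Machinery
variable {p : Fin 4 → MultiProj K n} {co : Fin 4 → K}

lemma contr_rel (p : Fin 4 → MultiProj K n) (co : Fin 4 → K)
    (hrel : ∑ j, co j • segreVec (p j) = 0) (i : Fin k) (φ : (Fin (n i + 1) → K) →ₗ[K] K) :
    ∑ j, (co j * φ ((p j i).rep)) • PiTensorProduct.tprod K
      (Function.update (fun l => (p j l).rep) i (onev K n i)) = 0 := by
  have h1 : ∑ j, (co j * φ ((p j i).rep)) • PiTensorProduct.tprod K
      (Function.update (fun l => (p j l).rep) i (onev K n i))
      = contr i φ (∑ j, co j • segreVec (p j)) := by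
    rw [map_sum]
    refine Finset.sum_congr rfl fun j _ => ?_
    rw [map_smul]
    simp only [segreVec, contr_tprod, smul_smul]
  rw [h1, hrel, map_zero]

lemma rep_slots_ne_zero (p : Fin 4 → MultiProj K n) (j : Fin 4) :
    ∀ l : Fin k, (fun l => (p j l).rep) l ≠ 0 := fun l => (p j l).rep_nonzero

/-- killing three coordinates at slot `i` while a fourth survives is impossible -/
lemma kill_three (hrel : ∑ j, co j • segreVec (p j) = 0) (hco : ∀ j, co j ≠ 0)
    (i : Fin k) (φ : (Fin (n i + 1) → K) →ₗ[K] K) {a b c d : Fin 4}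
    (hab : a ≠ b) (hac : a ≠ c) (had : a ≠ d) (hbc : b ≠ c) (hbd : b ≠ d) (hcd : c ≠ d)
    (hφa : φ ((p a i).rep) = 0) (hφb : φ ((p b i).rep) = 0) (hφc : φ ((p c i).rep) = 0)
    (hφd : φ ((p d i).rep) ≠ 0) : False := by
  have h0 := contr_rel p co hrel i φ
  rw [fin4_sum _ hab hac had hbc hbd hcd, hφa, hφb, hφc] at h0
  simp only [mul_zero, zero_smul, zero_add] at h0
  rcases smul_eq_zero.mp h0 with h1 | h1
  · exact (mul_ne_zero (hco d) hφd) h1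
  · exact tprod_ne_zero _ (update_slots_ne_zero (rep_slots_ne_zero p d) i) h1

/-- killing two coordinates at slot `i` forces the other two points to be
proportional at every other slot -/
lemma kill_two (hrel : ∑ j, co j • segreVec (p j) = 0) (hco : ∀ j, co j ≠ 0)
    (i : Fin k) (φ : (Fin (n i + 1) → K) →ₗ[K] K) {a b c d : Fin 4}
    (hab : a ≠ b) (hac : a ≠ c) (had : a ≠ d) (hbc : b ≠ c) (hbd : b ≠ d) (hcd : c ≠ d)
    (hφa : φ ((p a i).rep) = 0) (hφb : φ ((p b i).rep) = 0) (hφc : φ ((p c i).rep) ≠ 0) :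
    ∀ l, l ≠ i → Para K ((p c l).rep) ((p d l).rep) := by
  by_cases hφd : φ ((p d i).rep) = 0
  · exact absurd (kill_three hrel hco i φ hab had hac hbd hbc hcd.symm hφa hφb hφd hφc) not_false
  have h0 := contr_rel p co hrel i φ
  rw [fin4_sum _ hab hac had hbc hbd hcd, hφa, hφb] at h0
  simp only [mul_zero, zero_smul, zero_add] at h0
  have h2 := two_term h0 (mul_ne_zero (hco c) hφc)
    (tprod_ne_zero _ (update_slots_ne_zero (rep_slots_ne_zero p c) i))
  have h3 := para_slots (update_slots_ne_zero (rep_slots_ne_zero p c) i) h2.2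
  intro l hl
  have h4 := h3 l
  rwa [Function.update_of_ne hl, Function.update_of_ne hl] at h4

lemma not_mem_span_singleton_of_not_para {m : ℕ} {u w : Fin m → K} (hu : u ≠ 0)
    (h : ¬ Para K u w) : u ∉ Submodule.span K {w} := by
  intro hmem
  obtain ⟨sc, hsc⟩ := Submodule.mem_span_singleton.mp hmem
  have hsc0 : sc ≠ 0 := by rintro rfl; rw [zero_smul] at hsc; exact hu hsc.symm
  exact h ⟨sc, hsc0, hsc.symm⟩

/-- no three of the four points can be proportional at a single slot -/
lemma no_triple (hrel : ∑ j, co j • segreVec (p j) = 0) (hco : ∀ j, co j ≠ 0)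
    (hspan : ∀ i, Submodule.span K (Set.range fun j => (p j i).rep) = ⊤)
    (hn : ∀ i, 0 < n i) (i : Fin k) {a b c : Fin 4}
    (hab : a ≠ b) (hac : a ≠ c) (hbc : b ≠ c)
    (h1 : Para K ((p b i).rep) ((p a i).rep)) (h2 : Para K ((p c i).rep) ((p a i).rep)) :
    False := by
  obtain ⟨d, had, hbd, hcd⟩ := fin4_fourth a b c hab hac hbc
  by_cases hPd : Para K ((p d i).rep) ((p a i).rep)
  · refine not_all_smul_of_span_top (by have := hn i; omega) (hspan i) ((p a i).rep) ?_
    intro j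
    have hju : j ∈ (Finset.univ : Finset (Fin 4)) := Finset.mem_univ j
    rw [fin4_univ a b c d hab hac had hbc hbd hcd] at hju
    simp only [Finset.mem_insert, Finset.mem_singleton] at hju
    rcases hju with rfl | rfl | rfl | rfl
    · exact ⟨1, (one_smul K _).symm⟩
    · exact ⟨h1.choose, h1.choose_spec.2⟩
    · exact ⟨h2.choose, h2.choose_spec.2⟩
    · exact ⟨hPd.choose, hPd.choose_spec.2⟩
  · obtain ⟨φ, hφd, hφW⟩ := exists_functional _
      (not_mem_span_singleton_of_not_para (p d i).rep_nonzero hPd)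
    have hφa : φ ((p a i).rep) = 0 := hφW _ (Submodule.mem_span_singleton_self _)
    have hφb : φ ((p b i).rep) = 0 := by
      obtain ⟨sc, _, hsc⟩ := h1
      rw [hsc]; rw [map_smul]; rw [hφa]; simp
    have hφc : φ ((p c i).rep) = 0 := by
      obtain ⟨sc, _, hsc⟩ := h2
      rw [hsc]; rw [map_smul]; rw [hφa]; simp
    exact kill_three hrel hco i φ hab hac had hbc hbd hcd hφa hφb hφc hφd

/-- if two points are proportional at slot `i`, the other two are proportional at
    all other slots, but not at slot `i` -/
lemma pair_step (hp : Function.Injective p)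
    (hrel : ∑ j, co j • segreVec (p j) = 0) (hco : ∀ j, co j ≠ 0)
    (hspan : ∀ i, Submodule.span K (Set.range fun j => (p j i).rep) = ⊤)
    (hn : ∀ i, 0 < n i) (i : Fin k) {a b c d : Fin 4}
    (hab : a ≠ b) (hac : a ≠ c) (had : a ≠ d) (hbc : b ≠ c) (hbd : b ≠ d) (hcd : c ≠ d)
    (hPba : Para K ((p b i).rep) ((p a i).rep)) :
    (∀ l, l ≠ i → Para K ((p c l).rep) ((p d l).rep)) ∧
      ¬ Para K ((p c i).rep) ((p d i).rep) := by
  have hPca : ¬ Para K ((p c i).rep) ((p a i).rep) :=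
    fun h => no_triple hrel hco hspan hn i hab hac hbc hPba h
  obtain ⟨φ, hφc, hφW⟩ := exists_functional _
    (not_mem_span_singleton_of_not_para (p c i).rep_nonzero hPca)
  have hφa : φ ((p a i).rep) = 0 := hφW _ (Submodule.mem_span_singleton_self _)
  have hφb : φ ((p b i).rep) = 0 := by
    obtain ⟨sc, _, hsc⟩ := hPba
    rw [hsc, map_smul, hφa]; simp
  have Hmain := kill_two hrel hco i φ hab hac had hbc hbd hcd hφa hφb hφc
  refine ⟨Hmain, fun hPi => ?_⟩
  have hpq : p c = p d := by
    funext l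
    rcases eq_or_ne l i with rfl | hl
    · exact eq_of_para_rep hPi
    · exact eq_of_para_rep (Hmain l hl)
  exact hcd (hp hpq)

/-- Lemma A : if `3 ≤ k` no two points can be proportional at any slot -/
lemma lemA (hp : Function.Injective p)
    (hrel : ∑ j, co j • segreVec (p j) = 0) (hco : ∀ j, co j ≠ 0)
    (hspan : ∀ i, Submodule.span K (Set.range fun j => (p j i).rep) = ⊤)
    (hn : ∀ i, 0 < n i) (hk3 : 3 ≤ k) {i : Fin k} {a b : Fin 4} (hab : a ≠ b)
    (hP : Para K ((p a i).rep) ((p b i).rep)) : False := by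
  obtain ⟨c, d, hac, had, hbc, hbd, hcd⟩ := fin4_compl a b hab
  have H1 := pair_step hp hrel hco hspan hn i hab hac had hbc hbd hcd hP.symm
  obtain ⟨l1, hl1⟩ := exists_ne_fin (by omega) i
  have H2 := pair_step hp hrel hco hspan hn l1 hcd hac.symm hbc.symm had.symm hbd.symm hab
    (H1.1 l1 hl1).symm
  obtain ⟨l2, hl2i, hl2l1⟩ := exists_ne_ne_fin hk3 i l1
  have H3 := pair_step hp hrel hco hspan hn l2 hab hac had hbc hbd hcd
    (H2.1 l2 hl2l1).symm
  exact H3.2 (H1.1 l2 hl2i)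

/-- Lemma B : if `3 ≤ k` and all projections are `P^1`, some two points must be
proportional at some slot -/
lemma lemB (hrel : ∑ j, co j • segreVec (p j) = 0) (hco : ∀ j, co j ≠ 0)
    (hk3 : 3 ≤ k) (hn1 : ∀ i, n i = 1)
    (hsing : ∀ i : Fin k, ∀ a b : Fin 4, a ≠ b → ¬ Para K ((p a i).rep) ((p b i).rep)) :
    False := by
  have hk0 : 0 < k := by omega
  set i0 : Fin k := ⟨0, hk0⟩ with hi0
  obtain ⟨φ, hφ1, hφW⟩ := exists_functional _
    (not_mem_span_singleton_of_not_para (p 1 i0).rep_nonzero (hsing i0 1 0 (by decide)))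
  have hφ0 : φ ((p 0 i0).rep) = 0 := hφW _ (Submodule.mem_span_singleton_self _)
  have hφ2 : φ ((p 2 i0).rep) ≠ 0 :=
    phi_ne_zero_dim2 (by rw [hn1 i0]) (p 0 i0).rep_nonzero (p 2 i0).rep_nonzero
      (hsing i0 2 0 (by decide)) hφ0 hφ1
  have hφ3 : φ ((p 3 i0).rep) ≠ 0 :=
    phi_ne_zero_dim2 (by rw [hn1 i0]) (p 0 i0).rep_nonzero (p 3 i0).rep_nonzero
      (hsing i0 3 0 (by decide)) hφ0 hφ1
  have h0 := contr_rel p co hrel i0 φ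
  obtain ⟨l1, hl1⟩ := exists_ne_fin (by omega) i0
  obtain ⟨ψ, hψ2, hψW⟩ := exists_functional _
    (not_mem_span_singleton_of_not_para (p 2 l1).rep_nonzero (hsing l1 2 1 (by decide)))
  have hψ1 : ψ ((p 1 l1).rep) = 0 := hψW _ (Submodule.mem_span_singleton_self _)
  have hψ3 : ψ ((p 3 l1).rep) ≠ 0 :=
    phi_ne_zero_dim2 (by rw [hn1 l1]) (p 1 l1).rep_nonzero (p 3 l1).rep_nonzero
      (hsing l1 3 1 (by decide)) hψ1 hψ2
  have h1 : ∑ j, ((co j * φ ((p j i0).rep)) * ψ ((p j l1).rep)) • PiTensorProduct.tprod K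
      (Function.update (Function.update (fun l => (p j l).rep) i0 (onev K n i0)) l1
        (onev K n l1)) = 0 := by
    have h2 := congrArg (contr l1 ψ) h0
    rw [map_zero, map_sum] at h2
    rw [← h2]
    refine Finset.sum_congr rfl fun j _ => ?_
    rw [map_smul, contr_tprod, Function.update_of_ne hl1, smul_smul]
  rw [Fin.sum_univ_four, hφ0, hψ1] at h1
  simp only [mul_zero, zero_mul, zero_smul, zero_add, add_zero] at h1
  have h3 := two_term h1 (mul_ne_zero (mul_ne_zero (hco 2) hφ2) hψ2)
    (tprod_ne_zero _ (update_slots_ne_zero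
      (update_slots_ne_zero (rep_slots_ne_zero p 2) i0) l1))
  have h4 := para_slots (update_slots_ne_zero
    (update_slots_ne_zero (rep_slots_ne_zero p 2) i0) l1) h3.2
  obtain ⟨l2, hl2i, hl2l1⟩ := exists_ne_ne_fin hk3 i0 l1
  have h5 := h4 l2
  rw [Function.update_of_ne hl2l1, Function.update_of_ne hl2l1,
    Function.update_of_ne hl2i, Function.update_of_ne hl2i] at h5
  exact hsing l2 2 3 (by decide) h5

/-- every factor has dimension at most 3, i.e. `n i ≤ 2` -/
lemma n_le_two (hrel : ∑ j, co j • segreVec (p j) = 0) (hco : ∀ j, co j ≠ 0)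
    (hspan : ∀ i, Submodule.span K (Set.range fun j => (p j i).rep) = ⊤)
    (i : Fin k) : n i ≤ 2 := by
  have hfr : (Set.range fun j : Fin 4 => (p j i).rep).finrank K = n i + 1 := by
    rw [Set.finrank, hspan i, finrank_top, Module.finrank_pi, Fintype.card_fin]
  have hle : n i + 1 ≤ 4 := by
    have h := finrank_range_le_card (R := K) (fun j : Fin 4 => (p j i).rep)
    rw [hfr, Fintype.card_fin] at h
    exact h
  by_contra hgt
  have hni : n i = 3 := by omega
  have hli : LinearIndependent K (fun j : Fin 4 => (p j i).rep) := by
    rw [linearIndependent_iff_card_eq_finrank_span, hfr, Fintype.card_fin, hni]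
  have hnm := hli.notMem_span_image (s := {j | j ≠ 0}) (x := 0) (by simp)
  obtain ⟨φ, hφ0, hφW⟩ := exists_functional _ hnm
  have hmem : ∀ j : Fin 4, j ≠ 0 → φ ((p j i).rep) = 0 := fun j hj =>
    hφW _ (Submodule.subset_span (Set.mem_image_of_mem _ hj))
  exact kill_three hrel hco i φ (a := 1) (b := 2) (c := 3) (d := 0)
    (by decide) (by decide) (by decide) (by decide) (by decide) (by decide)
    (hmem 1 (by decide)) (hmem 2 (by decide)) (hmem 3 (by decide)) hφ0

/-- if `n i = 2`, any two of the four points are proportional at every other slot -/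
lemma pair_link (hrel : ∑ j, co j • segreVec (p j) = 0) (hco : ∀ j, co j ≠ 0)
    (hspan : ∀ i, Submodule.span K (Set.range fun j => (p j i).rep) = ⊤)
    (i : Fin k) (hni : n i = 2) {a b c d : Fin 4}
    (hab : a ≠ b) (hac : a ≠ c) (had : a ≠ d) (hbc : b ≠ c) (hbd : b ≠ d) (hcd : c ≠ d) :
    ∀ l, l ≠ i → Para K ((p c l).rep) ((p d l).rep) := by
  set W := Submodule.span K {(p a i).rep, (p b i).rep} with hW
  have hWa : (p a i).rep ∈ W := Submodule.subset_span (Set.mem_insert _ _)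
  have hWb : (p b i).rep ∈ W := Submodule.subset_span (Set.mem_insert_of_mem _ rfl)
  by_cases hcmem : (p c i).rep ∈ W
  · by_cases hdmem : (p d i).rep ∈ W
    · exfalso
      have htople : Submodule.span K (Set.range fun j : Fin 4 => (p j i).rep) ≤ W := by
        rw [Submodule.span_le]
        rintro _ ⟨j, rfl⟩
        have hju : j ∈ (Finset.univ : Finset (Fin 4)) := Finset.mem_univ j
        rw [fin4_univ a b c d hab hac had hbc hbd hcd] at hju
        simp only [Finset.mem_insert, Finset.mem_singleton] at hju
        rcases hju with rfl | rfl | rfl | rfl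
        · exact hWa
        · exact hWb
        · exact hcmem
        · exact hdmem
      rw [hspan i] at htople
      have hWtop : W = ⊤ := top_le_iff.mp htople
      have hfr2 : Module.finrank K ↥W ≤ 2 := by
        have hr : Set.range ![(p a i).rep, (p b i).rep] = {(p a i).rep, (p b i).rep} := by
          ext z; simp [Fin.exists_fin_two, or_comm]
        have h := finrank_range_le_card (R := K) ![(p a i).rep, (p b i).rep]
        rw [Set.finrank, hr, Fintype.card_fin] at h
        exact h
      rw [hWtop, finrank_top, Module.finrank_pi, Fintype.card_fin, hni] at hfr2
      omega
    · obtain ⟨φ, hφd, hφW⟩ := exists_functional _ hdmem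
      exact fun l hl => (kill_two hrel hco i φ hab had hac hbd hbc hcd.symm
        (hφW _ hWa) (hφW _ hWb) hφd l hl).symm
  · obtain ⟨φ, hφc, hφW⟩ := exists_functional _ hcmem
    exact kill_two hrel hco i φ hab hac had hbc hbd hcd (hφW _ hWa) (hφW _ hWb) hφc

/-- if `2 ≤ k` then no factor can have `n i = 2` -/
lemma n_ne_two (hrel : ∑ j, co j • segreVec (p j) = 0) (hco : ∀ j, co j ≠ 0)
    (hspan : ∀ i, Submodule.span K (Set.range fun j => (p j i).rep) = ⊤)
    (hn : ∀ i, 0 < n i) (hk2 : 2 ≤ k) (i : Fin k) (hni : n i = 2) : False := by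
  obtain ⟨l, hl⟩ := exists_ne_fin hk2 i
  have h23 := pair_link hrel hco hspan i hni (a := 0) (b := 1) (c := 2) (d := 3)
    (by decide) (by decide) (by decide) (by decide) (by decide) (by decide) l hl
  have h13 := pair_link hrel hco hspan i hni (a := 0) (b := 2) (c := 1) (d := 3)
    (by decide) (by decide) (by decide) (by decide) (by decide) (by decide) l hl
  have h03 := pair_link hrel hco hspan i hni (a := 1) (b := 2) (c := 0) (d := 3)
    (by decide) (by decide) (by decide) (by decide) (by decide) (by decide) l hl
  refine not_all_smul_of_span_top (by have := hn l; omega) (hspan l) ((p 3 l).rep) ?_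
  intro j
  fin_cases j
  · exact ⟨h03.choose, h03.choose_spec.2⟩
  · exact ⟨h13.choose, h13.choose_spec.2⟩
  · exact ⟨h23.choose, h23.choose_spec.2⟩
  · exact ⟨1, (one_smul K _).symm⟩

end Machinery
end SegreAux

theorem segre_circuit_card_four_classification
    {K : Type*} [Field K] {k : ℕ} {n : Fin k → ℕ}
    (hk : 0 < k) (hn : ∀ i, 0 < n i)
    (S : Set (MultiProj K n)) (hSfin : S.Finite) (hScard : S.ncard = 4)
    (hnd : Nondeg S) (hcirc : IsCircuit S) :
    (k = 1 ∧ ∀ i, n i = 2) ∨ (k = 2 ∧ ∀ i, n i = 1) := by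
  classical
  have hS4 : Fintype.card ↥hSfin.toFinset = 4 := by
    rw [Fintype.card_coe, ← Set.ncard_eq_toFinset_card S hSfin, hScard]
  set e : Fin 4 ≃ ↥hSfin.toFinset := (Fintype.equivFinOfCardEq hS4).symm with he
  set p : Fin 4 → MultiProj K n := fun j => ((e j : ↥hSfin.toFinset) : MultiProj K n)
    with hpdef
  have hp : Function.Injective p := by
    intro a b hab
    exact e.injective (Subtype.coe_injective hab)
  have hrange : Set.range p = S := by
    ext y
    constructor
    · rintro ⟨j, rfl⟩
      exact hSfin.mem_toFinset.mp (e j).2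
    · intro hy
      refine ⟨e.symm ⟨y, hSfin.mem_toFinset.mpr hy⟩, ?_⟩
      simp [hpdef]
  have hspan : ∀ i, Submodule.span K (Set.range fun j => (p j i).rep) = ⊤ := by
    intro i
    have h1 : Set.range (fun j => (p j i).rep) = (fun x => (x i).rep) '' S := by
      rw [← hrange, ← Set.range_comp]
      rfl
    rw [h1]
    exact hnd i
  have hcard3 : ∀ j0 : Fin 4, Fintype.card {j : Fin 4 // j ≠ j0} = 3 := by
    intro j0
    simp [Fintype.card_subtype_compl]
  have hind : ∀ j0 : Fin 4,
      LinearIndependent K (fun j : {j : Fin 4 // j ≠ j0} => segreVec (p j.1)) := by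
    intro j0
    have hmem : p j0 ∈ S := by rw [← hrange]; exact Set.mem_range_self j0
    have hss : S \ {p j0} ⊂ S := Set.sdiff_singleton_ssubset.mpr hmem
    have he0 := hcirc.2 _ hss
    have hcard' : (S \ {p j0}).ncard = 3 := by
      rw [Set.ncard_diff_singleton_of_mem hmem, hScard]
    have hfr3 : 3 ≤ Module.finrank K ↥(Submodule.span K (segreVec '' (S \ {p j0}))) := by
      unfold eSet at he0
      rw [hcard'] at he0
      omega
    have hsplit : S \ {p j0} = p '' {j | j ≠ j0} := by
      ext y
      constructor
      · rintro ⟨hyS, hy⟩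
        rw [← hrange] at hyS
        obtain ⟨j, rfl⟩ := hyS
        refine ⟨j, ?_, rfl⟩
        rintro rfl
        exact hy rfl
      · rintro ⟨j, hj, rfl⟩
        refine ⟨by rw [← hrange]; exact Set.mem_range_self j, ?_⟩
        intro hyy
        rw [Set.mem_singleton_iff] at hyy
        exact hj (hp hyy)
    have him : segreVec '' (S \ {p j0})
        = Set.range (fun j : {j : Fin 4 // j ≠ j0} => segreVec (p j.1)) := by
      rw [hsplit, ← Set.image_comp, Set.image_eq_range]
      rfl
    rw [linearIndependent_iff_card_eq_finrank_span, hcard3 j0]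
    have hub := finrank_range_le_card (R := K)
      (fun j : {j : Fin 4 // j ≠ j0} => segreVec (p j.1))
    rw [hcard3 j0] at hub
    have hlow : 3 ≤ (Set.range (fun j : {j : Fin 4 // j ≠ j0} => segreVec (p j.1))).finrank K := by
      rw [show (Set.range (fun j : {j : Fin 4 // j ≠ j0} => segreVec (p j.1))).finrank K
        = Module.finrank K ↥(Submodule.span K (segreVec '' (S \ {p j0}))) from by
          rw [him]; rfl]
      exact hfr3
    omega
  have hnli : ¬ LinearIndependent K (fun j : Fin 4 => segreVec (p j)) := by
    intro hli
    have h4 := finrank_span_eq_card hli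
    have him : Set.range (fun j : Fin 4 => segreVec (p j)) = segreVec '' S := by
      rw [← hrange, ← Set.range_comp]
      rfl
    rw [him, Fintype.card_fin] at h4
    have h0 := hcirc.1
    unfold eSet at h0
    rw [hScard, h4] at h0
    omega
  obtain ⟨g, hgsum, jw, hjw⟩ := Fintype.not_linearIndependent_iff.mp hnli
  have hg : ∀ j, g j ≠ 0 := by
    by_contra hcon
    push_neg at hcon
    obtain ⟨j0, hj0⟩ := hcon
    have hsum' : ∑ j ∈ Finset.univ.erase j0, g j • segreVec (p j) = 0 := by
      have h1 := Finset.sum_erase_add Finset.univ (fun j => g j • segreVec (p j))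
        (Finset.mem_univ j0)
      simp only [hj0, zero_smul, add_zero] at h1
      rw [h1, hgsum]
    have hsub : ∑ j : {j : Fin 4 // j ≠ j0}, g j.1 • segreVec (p j.1) = 0 := by
      rw [← Finset.sum_subtype (Finset.univ.erase j0)
        (fun x => by simp [Finset.mem_erase]) (fun j => g j • segreVec (p j))]
      exact hsum'
    have hz := Fintype.linearIndependent_iff.mp (hind j0) (fun j => g j.1) hsub
    rcases eq_or_ne jw j0 with rfl | hne
    · exact hjw hj0
    · exact hjw (hz ⟨jw, hne⟩)
  by_cases hk1 : k = 1
  · left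
    subst hk1
    refine ⟨rfl, fun i => ?_⟩
    have hle := SegreAux.n_le_two hgsum hg hspan i
    have hT : ∃ T : (Fin (n i + 1) → K) →ₗ[K]
        (PiTensorProduct K fun l : Fin 1 => Fin (n l + 1) → K),
        ∀ j : Fin 4, T ((p j i).rep) = segreVec (p j) := by
      refine ⟨(PiTensorProduct.tprod K).toLinearMap (fun l => (p 0 l).rep) i, fun j => ?_⟩
      show PiTensorProduct.tprod K
        (Function.update (fun l => (p 0 l).rep) i ((p j i).rep)) = _
      unfold segreVec
      congr 1
      funext l
      have hl : l = i := Subsingleton.elim l i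
      subst hl
      rw [Function.update_self]
    obtain ⟨T, hT⟩ := hT
    have hxli : LinearIndependent K (fun j : {j : Fin 4 // j ≠ 3} => (p j.1 i).rep) := by
      refine LinearIndependent.of_comp T ?_
      have hcomp : (T ∘ fun j : {j : Fin 4 // j ≠ 3} => (p j.1 i).rep)
          = fun j : {j : Fin 4 // j ≠ 3} => segreVec (p j.1) := by
        funext j
        exact hT j.1
      rw [hcomp]
      exact hind 3
    have h3 : 3 ≤ Module.finrank K (Fin (n i + 1) → K) := by
      have h1 := finrank_span_eq_card hxli
      rw [hcard3 3] at h1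
      have h2 := Submodule.finrank_le
        (Submodule.span K (Set.range fun j : {j : Fin 4 // j ≠ 3} => (p j.1 i).rep))
      omega
    rw [Module.finrank_pi, Fintype.card_fin] at h3
    omega
  · have hk2 : 2 ≤ k := by omega
    have hn1 : ∀ i, n i = 1 := by
      intro i
      have hle := SegreAux.n_le_two hgsum hg hspan i
      rcases Nat.lt_or_ge (n i) 2 with h | h
      · have := hn i; omega
      · exfalso
        exact SegreAux.n_ne_two hgsum hg hspan hn hk2 i (by omega)
    right
    refine ⟨?_, hn1⟩
    by_contra hk2'
    have hk3 : 3 ≤ k := by omega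
    by_cases hPara : ∃ i : Fin k, ∃ a b : Fin 4, a ≠ b ∧
        SegreAux.Para K ((p a i).rep) ((p b i).rep)
    · obtain ⟨i, a, b, hab, hP⟩ := hPara
      exact SegreAux.lemA hp hgsum hg hspan hn hk3 hab hP
    · push_neg at hPara
      exact SegreAux.lemB hgsum hg hk3 hn1 fun i a b hab => hPara i a b hab
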